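/- Let H be a real Hilbert space, K : H → H a bounded self-adjoint linear operator, b ∈ H, c ∈ ℝ, and f(u) = ⟨K u, u⟩ + 2⟨b, u⟩ + c. Then f attains its infimum over H if and only if K is positive semidefinite and b belongs to the range of K. -/

import Mathlib

open scoped RealInnerProductSpace

/-- The quadratic functional `f(u) = ⟪K u, u⟫ + 2⟪b, u⟫ + c` associated to a bounded
self-adjoint operator `K` on a real Hilbert space attains its infimum over `H` if and only
if `K` is positive semidefinite and `b` belongs to the range of `K`. -/
theorem stmt_2 {H : Type*} [NormedAddCommGroup H] [InnerProductSpace ℝ H] [CompleteSpace H]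
    (K : H →L[ℝ] H) (hK : ∀ u v : H, ⟪K u, v⟫ = ⟪u, K v⟫)
    (b : H) (c : ℝ) :
    (∃ ustar : H, ∀ u : H,
        ⟪K ustar, ustar⟫ + 2 * ⟪b, ustar⟫ + c ≤ ⟪K u, u⟫ + 2 * ⟪b, u⟫ + c)
      ↔ ((∀ u : H, 0 ≤ ⟪K u, u⟫) ∧ b ∈ Set.range K) := by
  constructor
  · rintro ⟨v, hv⟩
    have key : ∀ u : H, ∀ t : ℝ,
        0 ≤ t ^ 2 * ⟪K u, u⟫ + 2 * t * (⟪K v, u⟫ + ⟪b, u⟫) := by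
      intro u t
      have h := hv (v + t • u)
      have hsym : ⟪K u, v⟫ = ⟪K v, u⟫ := by rw [hK u v, real_inner_comm]
      simp only [map_add, map_smul, inner_add_left, inner_add_right,
        real_inner_smul_left, real_inner_smul_right, ContinuousLinearMap.coe_smul',
        Pi.smul_apply, smul_eq_mul] at h
      rw [hsym] at h
      nlinarith [h]
    have hpsd : ∀ u : H, 0 ≤ ⟪K u, u⟫ := by
      intro u
      by_contra hneg
      push_neg at hneg
      have h := key u ((2 * |⟪K v, u⟫ + ⟪b, u⟫| + 1) / (-⟪K u, u⟫))
      set a := ⟪K u, u⟫ with ha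
      set β := ⟪K v, u⟫ + ⟪b, u⟫ with hβ
      set t : ℝ := (2 * |β| + 1) / (-a) with ht
      have hna : 0 < -a := by linarith
      have hta : t * a = -(2 * |β| + 1) := by
        rw [ht, div_mul_eq_mul_div, div_eq_iff hna.ne']; ring
      have htpos : 0 < t := by
        apply div_pos; positivity; exact hna
      have h1 : β ≤ |β| := le_abs_self β
      have hrw : t ^ 2 * a + 2 * t * β = t * (t * a + 2 * β) := by ring
      rw [hrw, hta] at h
      nlinarith [h, htpos, h1]
    have hzero : ∀ u : H, ⟪K v, u⟫ + ⟪b, u⟫ = 0 := by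
      intro u
      have hapos := hpsd u
      have h := key u (-(⟪K v, u⟫ + ⟪b, u⟫) / (⟪K u, u⟫ + 1))
      set a := ⟪K u, u⟫ with ha
      set β := ⟪K v, u⟫ + ⟪b, u⟫ with hβ
      set t : ℝ := -β / (a + 1) with ht
      have ha1 : (0:ℝ) < a + 1 := by linarith
      have htm : t * (a + 1) = -β := by
        rw [ht]; field_simp
      have h3 : t ^ 2 * (a + 1) = t * (-β) := by rw [← htm]; ring
      have ht2 : t ^ 2 ≤ 0 := by nlinarith [h, h3, hapos]
      have ht0 : t = 0 := by
        have h2 : t ^ 2 = 0 := le_antisymm ht2 (sq_nonneg t)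
        exact (pow_eq_zero_iff two_ne_zero).mp h2
      rw [ht0] at htm
      simp at htm
      linarith
    have hKvb : K v + b = 0 := by
      have h := hzero (K v + b)
      rw [← inner_add_left] at h
      exact inner_self_eq_zero.mp h
    refine ⟨hpsd, -v, ?_⟩
    rw [map_neg]
    exact neg_eq_of_add_eq_zero_right hKvb
  · rintro ⟨hpsd, w, hw⟩
    subst hw
    refine ⟨-w, fun u => ?_⟩
    have h := hpsd (u + w)
    have hsym : ⟪K u, w⟫ = ⟪K w, u⟫ := by rw [hK u w, real_inner_comm]
    simp only [map_add, map_neg, inner_add_left, inner_add_right,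
      inner_neg_left, inner_neg_right] at h ⊢
    linarith
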